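/- (One-vs-rest Corollary) Let N ≥ 2 and let the time-evolved N-body state be the unit vector ψ_t : {0,1}^N → ℂ with ψ_t(J) = 2^{−N/2}·exp(i·t·Σ_{p<q} φ_{pq}(J_p,J_q)). Let ρ(t) be the 2×2 reduced density matrix of qubit 1, with entries ρ(t)_{x y} = Σ_{j ∈ {0,1}^{N−1}} ψ_t(x⌢j)·conj(ψ_t(y⌢j)) for x, y ∈ {0,1}. Then the squared I-concurrence across the bipartition 1|(2,…,N) satisfies 2·(1 − Σ_{x,y}|ρ(t)_{xy}|²) = 1 − Π_{b=2}^{N} cos²(Φ_{1b}·t/2), where Φ_{1b} = φ_{1b}(0,1) + φ_{1b}(1,0) − φ_{1b}(0,0) − φ_{1b}(1,1). -/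

import Mathlib

open Real

lemma abs_sq_exp_pair (a b : ℝ) :
    ‖Complex.exp (Complex.I * a) + Complex.exp (Complex.I * b)‖ ^ 2
      = 4 * Real.cos ((a - b) / 2) ^ 2 := by
  have h4 : (4 : ℝ) * Real.cos ((a - b) / 2) ^ 2 = 2 + 2 * Real.cos (a - b) := by
    have h := Real.cos_sq ((a - b) / 2)
    have h2 : 2 * ((a - b) / 2) = a - b := by ring
    rw [h2] at h
    linarith
  rw [h4, Complex.sq_norm]
  have ea : Complex.exp (Complex.I * a)
      = Complex.ofReal (Real.cos a) + Complex.ofReal (Real.sin a) * Complex.I := by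
    rw [mul_comm, Complex.exp_mul_I, Complex.ofReal_cos, Complex.ofReal_sin]
  have eb : Complex.exp (Complex.I * b)
      = Complex.ofReal (Real.cos b) + Complex.ofReal (Real.sin b) * Complex.I := by
    rw [mul_comm, Complex.exp_mul_I, Complex.ofReal_cos, Complex.ofReal_sin]
  rw [ea, eb]
  have hre : (Complex.ofReal (Real.cos a) + Complex.ofReal (Real.sin a) * Complex.I)
      + (Complex.ofReal (Real.cos b) + Complex.ofReal (Real.sin b) * Complex.I)
      = Complex.ofReal (Real.cos a + Real.cos b)
        + Complex.ofReal (Real.sin a + Real.sin b) * Complex.I := by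
    push_cast; ring
  rw [hre, Complex.normSq_add_mul_I, Real.cos_sub]
  nlinarith [Real.sin_sq_add_cos_sq a, Real.sin_sq_add_cos_sq b]

theorem one_vs_rest_I_concurrence (m : ℕ) (hm : 1 ≤ m)
    (φ : Fin (m + 1) → Fin (m + 1) → Fin 2 → Fin 2 → ℝ) (t : ℝ)
    (phiJ : (Fin (m + 1) → Fin 2) → ℝ)
    (hphiJ : ∀ J, phiJ J = ∑ p, ∑ q, if p < q then φ p q (J p) (J q) else 0)
    (ψ : (Fin (m + 1) → Fin 2) → ℂ)
    (hψ : ∀ J, ψ J = Complex.ofReal (1 / Real.sqrt (2 ^ (m + 1))) *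
      Complex.exp (Complex.I * Complex.ofReal (t * phiJ J)))
    (ρ : Fin 2 → Fin 2 → ℂ)
    (hρ : ∀ x y, ρ x y = ∑ j : Fin m → Fin 2,
      ψ (Fin.cons x j) * (starRingEnd ℂ) (ψ (Fin.cons y j))) :
    2 * (1 - ∑ x : Fin 2, ∑ y : Fin 2, ‖ρ x y‖ ^ 2) =
      1 - ∏ b : Fin m,
        Real.cos ((φ 0 b.succ 0 1 + φ 0 b.succ 1 0 -
          φ 0 b.succ 0 0 - φ 0 b.succ 1 1) * t / 2) ^ 2 := by
  set c : ℝ := 1 / Real.sqrt (2 ^ (m + 1)) with hc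
  have hc2 : c ^ 2 = 1 / 2 ^ (m + 1) := by
    rw [hc, div_pow, one_pow, Real.sq_sqrt (by positivity)]
  -- phase difference across the bipartition
  have diff : ∀ (x y : Fin 2) (j : Fin m → Fin 2),
      phiJ (Fin.cons x j) - phiJ (Fin.cons y j)
        = ∑ b : Fin m, (φ 0 b.succ x (j b) - φ 0 b.succ y (j b)) := by
    intro x y j
    simp only [hphiJ, Fin.sum_univ_succ, Fin.cons_zero, Fin.cons_succ,
      lt_self_iff_false, if_false, Fin.succ_pos, if_true, Fin.not_lt_zero,
      Fin.succ_lt_succ_iff, zero_add]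
    rw [Finset.sum_sub_distrib]
    ring
  -- entries of the reduced density matrix
  have entry : ∀ x y : Fin 2, ρ x y = Complex.ofReal (c ^ 2) *
      ∏ b : Fin m, ∑ v : Fin 2,
        Complex.exp (Complex.I * Complex.ofReal (t * (φ 0 b.succ x v - φ 0 b.succ y v))) := by
    intro x y
    rw [hρ]
    have hterm : ∀ j : Fin m → Fin 2,
        ψ (Fin.cons x j) * (starRingEnd ℂ) (ψ (Fin.cons y j))
          = Complex.ofReal (c ^ 2) * ∏ b : Fin m,
            Complex.exp (Complex.I *
              Complex.ofReal (t * (φ 0 b.succ x (j b) - φ 0 b.succ y (j b)))) := by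
      intro j
      have hconj : (starRingEnd ℂ) (Complex.exp (Complex.I * ↑(t * phiJ (Fin.cons y j))))
          = Complex.exp (-(Complex.I * ↑(t * phiJ (Fin.cons y j)))) := by
        rw [← Complex.exp_conj, map_mul, Complex.conj_I, Complex.conj_ofReal, neg_mul]
      have hsum : t * phiJ (Fin.cons x j) - t * phiJ (Fin.cons y j)
          = ∑ b : Fin m, t * (φ 0 b.succ x (j b) - φ 0 b.succ y (j b)) := by
        rw [← Finset.mul_sum, ← diff x y j]; ring
      have key : Complex.exp (Complex.I * ↑(t * phiJ (Fin.cons x j))) *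
          Complex.exp (-(Complex.I * ↑(t * phiJ (Fin.cons y j))))
          = ∏ b : Fin m, Complex.exp (Complex.I *
              Complex.ofReal (t * (φ 0 b.succ x (j b) - φ 0 b.succ y (j b)))) := by
        rw [← Complex.exp_sum, ← Complex.exp_add, ← Finset.mul_sum,
          ← Complex.ofReal_sum, ← hsum]
        push_cast
        ring
      rw [hψ, hψ, map_mul, Complex.conj_ofReal, hconj, mul_mul_mul_comm, key]
      congr 1
      push_cast
      ring
    simp only [hterm, ← Finset.mul_sum]
    congr 1
    rw [Fintype.prod_sum]
  -- diagonal entries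
  have diag : ∀ x : Fin 2, ρ x x = Complex.ofReal (1 / 2) := by
    intro x
    rw [entry x x]
    simp only [sub_self, mul_zero, Complex.ofReal_zero, Complex.exp_zero]
    rw [Finset.sum_const, Finset.prod_const]
    simp only [Finset.card_univ, Fintype.card_fin, smul_eq_mul, nsmul_eq_mul, Nat.cast_ofNat, mul_one]
    rw [hc2]
    push_cast
    rw [pow_succ]
    have h2m : ((2 : ℂ) ^ m) ≠ 0 := pow_ne_zero _ two_ne_zero
    field_simp
  -- squared absolute values
  set P : ℝ := ∏ b : Fin m,
    Real.cos ((φ 0 b.succ 0 1 + φ 0 b.succ 1 0 -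
      φ 0 b.succ 0 0 - φ 0 b.succ 1 1) * t / 2) ^ 2 with hP
  have habs : ∀ x y : Fin 2, ‖ρ x y‖ ^ 2
      = (1 / 2 ^ (m + 1)) ^ 2 * ∏ b : Fin m, ‖∑ v : Fin 2,
          Complex.exp (Complex.I *
            Complex.ofReal (t * (φ 0 b.succ x v - φ 0 b.succ y v)))‖ ^ 2 := by
    intro x y
    rw [entry x y, norm_mul, Complex.norm_real, Real.norm_eq_abs, abs_of_nonneg (sq_nonneg c), hc2,
      mul_pow, norm_prod, ← Finset.prod_pow]
  have hquarter : ((1 : ℝ) / 2 ^ (m + 1)) ^ 2 * 4 ^ m = 1 / 4 := by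
    have h1 : ((2 : ℝ) ^ (m + 1)) ^ 2 = 4 * 4 ^ m := by
      rw [← pow_mul, mul_comm (m + 1) 2, pow_mul]
      norm_num [pow_succ]
      ring
    rw [div_pow, one_pow, h1]
    have : (4 : ℝ) ^ m ≠ 0 := by positivity
    field_simp
  have h01 : ‖ρ 0 1‖ ^ 2 = 1 / 4 * P := by
    rw [habs 0 1]
    have hb : ∀ b : Fin m, ‖∑ v : Fin 2,
        Complex.exp (Complex.I *
          Complex.ofReal (t * (φ 0 b.succ 0 v - φ 0 b.succ 1 v)))‖ ^ 2
        = 4 * Real.cos ((φ 0 b.succ 0 1 + φ 0 b.succ 1 0 -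
            φ 0 b.succ 0 0 - φ 0 b.succ 1 1) * t / 2) ^ 2 := by
      intro b
      rw [Fin.sum_univ_two, abs_sq_exp_pair]
      rw [show (t * (φ 0 b.succ 0 0 - φ 0 b.succ 1 0) -
          t * (φ 0 b.succ 0 1 - φ 0 b.succ 1 1)) / 2
        = -((φ 0 b.succ 0 1 + φ 0 b.succ 1 0 -
            φ 0 b.succ 0 0 - φ 0 b.succ 1 1) * t / 2) by ring, Real.cos_neg]
    simp only [hb]
    rw [Finset.prod_mul_distrib, Finset.prod_const, Finset.card_univ, Fintype.card_fin,
      ← mul_assoc, hquarter, hP]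
  have h10 : ‖ρ 1 0‖ ^ 2 = 1 / 4 * P := by
    rw [habs 1 0]
    have hb : ∀ b : Fin m, ‖∑ v : Fin 2,
        Complex.exp (Complex.I *
          Complex.ofReal (t * (φ 0 b.succ 1 v - φ 0 b.succ 0 v)))‖ ^ 2
        = 4 * Real.cos ((φ 0 b.succ 0 1 + φ 0 b.succ 1 0 -
            φ 0 b.succ 0 0 - φ 0 b.succ 1 1) * t / 2) ^ 2 := by
      intro b
      rw [Fin.sum_univ_two, abs_sq_exp_pair]
      rw [show (t * (φ 0 b.succ 1 0 - φ 0 b.succ 0 0) -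
          t * (φ 0 b.succ 1 1 - φ 0 b.succ 0 1)) / 2
        = (φ 0 b.succ 0 1 + φ 0 b.succ 1 0 -
            φ 0 b.succ 0 0 - φ 0 b.succ 1 1) * t / 2 by ring]
    simp only [hb]
    rw [Finset.prod_mul_distrib, Finset.prod_const, Finset.card_univ, Fintype.card_fin,
      ← mul_assoc, hquarter, hP]
  have hdiagabs : ∀ x : Fin 2, ‖ρ x x‖ ^ 2 = 1 / 4 := by
    intro x
    rw [diag x, Complex.norm_real]
    norm_num
  rw [Fin.sum_univ_two, Fin.sum_univ_two, Fin.sum_univ_two,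
    hdiagabs 0, hdiagabs 1, h01, h10]
  ring
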